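/- Let G be a k-contraction-critical graph with k ≥ 2. Then for every vertex v of G, the independence number of the subgraph induced on the neighborhood of v is at most d(v) − k + 2. -/

import Mathlib

private lemma iso_empty_of_card_ne {W V : Type} [Fintype W] [Fintype V]
    (H : SimpleGraph W) (G : SimpleGraph V) (h : Fintype.card W ≠ Fintype.card V) :
    IsEmpty (H ≃g G) :=
  ⟨fun e => h (Fintype.card_congr e.toEquiv)⟩

private lemma chrom_contra {V : Type} (G : SimpleGraph V) {k n : ℕ}
    (hχ : G.chromaticNumber = k) (hn : n < k) (hc : G.Colorable n) : False := by
  have h := hc.chromaticNumber_le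
  rw [hχ] at h
  exact absurd (Nat.cast_le.mp h) (Nat.not_le.mpr hn)

private lemma conn_singleton {V : Type} (G : SimpleGraph V) (a : V) :
    (G.induce {a}).Connected := by
  haveI : Nonempty ({a} : Set V) := ⟨⟨a, rfl⟩⟩
  refine ⟨fun x y => ?_⟩
  have : x = y := Subtype.ext
    ((Set.mem_singleton_iff.mp x.2).trans (Set.mem_singleton_iff.mp y.2).symm)
  rw [this]

private lemma conn_star {V : Type} (G : SimpleGraph V) (v : V) (s : Finset V)
    (hadj : ∀ a ∈ s, G.Adj v a) :
    (G.induce (↑s ∪ {v} : Set V)).Connected := by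
  have hv : v ∈ (↑s ∪ {v} : Set V) := Or.inr rfl
  haveI : Nonempty (↑s ∪ {v} : Set V) := ⟨⟨v, hv⟩⟩
  have key : ∀ x : (↑s ∪ {v} : Set V), (G.induce (↑s ∪ {v} : Set V)).Reachable x ⟨v, hv⟩ := by
    intro x
    rcases x.2 with hx | hx
    · exact SimpleGraph.Adj.reachable (by exact (hadj x.1 hx).symm)
    · have : x = ⟨v, hv⟩ := Subtype.ext hx
      rw [this]
  exact ⟨fun a b => (key a).trans (key b).symm⟩

private lemma allcolors {k : ℕ} (hk : 2 ≤ k) {V : Type} [Fintype V] (G : SimpleGraph V)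
    [DecidableRel G.Adj] (hχ : G.chromaticNumber = k) (v : V) (c' : V → Fin (k-1))
    (hc' : ∀ x y, G.Adj x y → x ≠ v → y ≠ v → c' x ≠ c' y) :
    (G.neighborFinset v).image c' = Finset.univ := by
  classical
  by_contra h
  obtain ⟨β, hβ⟩ : ∃ β, β ∉ (G.neighborFinset v).image c' := by
    by_contra hc
    push_neg at hc
    exact h (Finset.eq_univ_iff_forall.mpr hc)
  have hcol : G.Colorable (k-1) := by
    refine ⟨SimpleGraph.Coloring.mk (fun x => if x = v then β else c' x) ?_⟩
    intro x y hxy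
    by_cases hx : x = v
    · subst hx
      have hy : y ≠ x := hxy.ne.symm
      simp only [if_pos rfl, if_neg hy]
      intro h'
      exact hβ (Finset.mem_image.mpr ⟨y, (G.mem_neighborFinset x y).mpr hxy, h'.symm⟩)
    · by_cases hy : y = v
      · subst hy
        simp only [if_neg hx, if_pos rfl]
        intro h'
        exact hβ (Finset.mem_image.mpr ⟨x, (G.mem_neighborFinset y x).mpr hxy.symm, h'⟩)
      · simp only [if_neg hx, if_neg hy]
        exact hc' x y hxy hx hy
  exact chrom_contra G hχ (by omega) hcol



/-- `MinorOf H G` means `H` is a minor of `G`: there are nonempty, pairwise disjoint,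
connected branch sets in `G`, one for each vertex of `H`, with an edge of `G` between the
branch sets of any two adjacent vertices of `H`. -/
def MinorOf {W V : Type} (H : SimpleGraph W) (G : SimpleGraph V) : Prop :=
  ∃ f : W → Set V,
    (∀ w, (f w).Nonempty) ∧
    (∀ w, (G.induce (f w)).Connected) ∧
    (Pairwise fun w w' => Disjoint (f w) (f w')) ∧
    (∀ w w', H.Adj w w' → ∃ v ∈ f w, ∃ v' ∈ f w', G.Adj v v')

/-- A graph `G` is `k`-contraction-critical if its chromatic number is `k` but every
proper minor of `G` (a minor not isomorphic to `G`) is `(k-1)`-colorable. -/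
def ContractionCritical (k : ℕ) {V : Type} [Fintype V] (G : SimpleGraph V) : Prop :=
  G.chromaticNumber = k ∧
  ∀ (W : Type) (_ : Fintype W) (H : SimpleGraph W),
    MinorOf H G → IsEmpty (H ≃g G) → H.Colorable (k - 1)

/-- Dirac's lemma: In a k-contraction-critical graph (k ≥ 2), for every
vertex v the independence number of the subgraph induced on N(v) is at most
d(v) − k + 2, i.e. any independent subset s of N(v) satisfies |s| + k ≤ d(v) + 2. -/
theorem stmt9 (k : ℕ) (hk : 2 ≤ k) (V : Type) [Fintype V] (G : SimpleGraph V)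
    [DecidableRel G.Adj] (hG : ContractionCritical k G) :
    ∀ v : V, ∀ s : Finset V, ↑s ⊆ G.neighborSet v →
      (∀ a ∈ s, ∀ b ∈ s, ¬ G.Adj a b) →
      s.card + k ≤ G.degree v + 2 := by
  classical
  obtain ⟨hχ, hmin⟩ := hG
  intro v s hs hind
  haveI : Nonempty V := ⟨v⟩
  have hvs : v ∉ s := fun h => G.notMem_neighborSet_self (hs (Finset.mem_coe.mpr h))
  have hsub : s ⊆ G.neighborFinset v := fun a ha =>
    (G.mem_neighborFinset v a).mpr (hs (Finset.mem_coe.mpr ha))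
  have hdeg : s.card ≤ G.degree v := by
    rw [← G.card_neighborFinset_eq_degree]
    exact Finset.card_le_card hsub
  rcases s.eq_empty_or_nonempty with hse | hse
  · -- deletion case: delete v
    subst hse
    simp only [Finset.card_empty, zero_add]
    by_cases hW : Nonempty {x : V // x ≠ v}
    · obtain ⟨w0⟩ := hW
      set H : SimpleGraph {x : V // x ≠ v} := G.comap Subtype.val with hH
      have hminor : ∃ f : {x : V // x ≠ v} → Set V,
          (∀ w, (f w).Nonempty) ∧
          (∀ w, (G.induce (f w)).Connected) ∧
          (Pairwise fun w w' => Disjoint (f w) (f w')) ∧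
          (∀ w w', H.Adj w w' → ∃ a ∈ f w, ∃ a' ∈ f w', G.Adj a a') := by
        refine ⟨fun w => {w.1}, fun w => ⟨w.1, rfl⟩, fun w => conn_singleton G w.1, ?_, ?_⟩
        · intro a b hne
          simp only [Set.disjoint_singleton_left, Set.mem_singleton_iff]
          exact fun h => hne (Subtype.ext h)
        · intro w w' h
          exact ⟨w.1, rfl, w'.1, rfl, h⟩
      have hiso : IsEmpty (H ≃g G) := by
        apply iso_empty_of_card_ne
        rw [Fintype.card_subtype_compl (p := fun x => x = v), Fintype.card_subtype_eq]
        exact (Nat.sub_lt Fintype.card_pos Nat.one_pos).ne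
      obtain ⟨c⟩ := hmin _ inferInstance H hminor hiso
      set c' : V → Fin (k-1) := fun x => if h : x = v then c w0 else c ⟨x, h⟩ with hc'def
      have hc' : ∀ x y, G.Adj x y → x ≠ v → y ≠ v → c' x ≠ c' y := by
        intro x y hadj hx hy
        simp only [hc'def, dif_neg hx, dif_neg hy]
        exact c.valid (by exact hadj)
      have himg := allcolors hk G hχ v c' hc'
      have h1 : k - 1 ≤ G.degree v := by
        have := Finset.card_image_le (s := G.neighborFinset v) (f := c')
        rw [himg, Finset.card_univ, Fintype.card_fin, G.card_neighborFinset_eq_degree] at this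
        exact this
      omega
    · haveI : Subsingleton V := by
        constructor
        intro a b
        have ha : a = v := by by_contra h; exact hW ⟨⟨a, h⟩⟩
        have hb : b = v := by by_contra h; exact hW ⟨⟨b, h⟩⟩
        rw [ha, hb]
      have hcol : G.Colorable 1 := by
        refine ⟨SimpleGraph.Coloring.mk (fun _ => 0) ?_⟩
        intro x y hxy
        exact absurd (Subsingleton.elim x y) hxy.ne
      exact absurd hcol (fun hc => chrom_contra G hχ (by omega) hc)
  · -- contraction case
    set f : {x : V // x ∉ s} → Set V := fun w => if w.1 = v then (↑s ∪ {v}) else {w.1} with hfdef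
    set H : SimpleGraph {x : V // x ∉ s} := {
      Adj := fun a b => a ≠ b ∧ ∃ u ∈ f a, ∃ u' ∈ f b, G.Adj u u'
      symm := by
        constructor
        rintro a b ⟨hne, u, hu, u', hu', hadj⟩
        exact ⟨hne.symm, u', hu', u, hu, hadj.symm⟩
      loopless := ⟨fun a h => h.1 rfl⟩ } with hHdef
    have hfv : ∀ w : {x : V // x ∉ s}, w.1 = v → f w = (↑s ∪ {v} : Set V) := by
      intro w h
      rw [hfdef]
      exact if_pos h
    have hfnv : ∀ w : {x : V // x ∉ s}, w.1 ≠ v → f w = {w.1} := by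
      intro w h
      rw [hfdef]
      exact if_neg h
    have hmem : ∀ w : {x : V // x ∉ s}, w.1 ∈ f w := by
      intro w
      by_cases h : w.1 = v
      · rw [hfv w h]
        exact Or.inr h
      · rw [hfnv w h]
        exact rfl
    have hminor : ∃ g : {x : V // x ∉ s} → Set V,
        (∀ w, (g w).Nonempty) ∧
        (∀ w, (G.induce (g w)).Connected) ∧
        (Pairwise fun w w' => Disjoint (g w) (g w')) ∧
        (∀ w w', H.Adj w w' → ∃ a ∈ g w, ∃ a' ∈ g w', G.Adj a a') := by
      refine ⟨f, fun w => ⟨w.1, hmem w⟩, ?_, ?_, fun w w' h => h.2⟩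
      · intro w
        by_cases h : w.1 = v
        · rw [hfv w h]
          exact conn_star G v s (fun a ha => (hs (Finset.mem_coe.mpr ha) : G.Adj v a))
        · rw [hfnv w h]
          exact conn_singleton G w.1
      · intro a b hne
        have hab : a.1 ≠ b.1 := fun h => hne (Subtype.ext h)
        by_cases ha : a.1 = v <;> by_cases hb : b.1 = v
        · exact absurd (ha.trans hb.symm) hab
        · rw [hfv a ha, hfnv b hb]
          simp only [Set.disjoint_singleton_right, Set.mem_union, Set.mem_singleton_iff,
            Finset.mem_coe]
          rintro (h | h)
          · exact b.2 h
          · exact hb h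
        · rw [hfnv a ha, hfv b hb]
          simp only [Set.disjoint_singleton_left, Set.mem_union, Set.mem_singleton_iff,
            Finset.mem_coe]
          rintro (h | h)
          · exact a.2 h
          · exact ha h
        · rw [hfnv a ha, hfnv b hb]
          simp only [Set.disjoint_singleton_left, Set.mem_singleton_iff]
          exact hab
    have hiso : IsEmpty (H ≃g G) := by
      apply iso_empty_of_card_ne
      rw [Fintype.card_subtype_compl (p := fun x => x ∈ s)]
      have hcs : Fintype.card {x // x ∈ s} = s.card := Fintype.card_coe s
      rw [hcs]
      exact (Nat.sub_lt Fintype.card_pos hse.card_pos).ne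
    obtain ⟨c⟩ := hmin _ inferInstance H hminor hiso
    set p : V → {x : V // x ∉ s} := fun x => if h : x ∈ s then ⟨v, hvs⟩ else ⟨x, h⟩ with hpdef
    set c' : V → Fin (k-1) := fun x => c (p x) with hc'def
    have hpmem : ∀ x, x ∈ f (p x) := by
      intro x
      by_cases hx : x ∈ s
      · have hp : p x = ⟨v, hvs⟩ := by rw [hpdef]; exact dif_pos hx
        rw [hp, hfv ⟨v, hvs⟩ rfl]
        exact Or.inl hx
      · have hp : p x = ⟨x, hx⟩ := by rw [hpdef]; exact dif_neg hx
        rw [hp]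
        exact hmem ⟨x, hx⟩
    have hc' : ∀ x y, G.Adj x y → x ≠ v → y ≠ v → c' x ≠ c' y := by
      intro x y hadj hx hy
      have hne : p x ≠ p y := by
        rw [hpdef]
        by_cases hxs : x ∈ s <;> by_cases hys : y ∈ s
        · exact absurd hadj (hind x hxs y hys)
        · simp only [dif_pos hxs, dif_neg hys]
          intro h; exact hy (congrArg Subtype.val h).symm
        · simp only [dif_neg hxs, dif_pos hys]
          intro h; exact hx (congrArg Subtype.val h)
        · simp only [dif_neg hxs, dif_neg hys]
          intro h; exact hadj.ne (congrArg Subtype.val h)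
      exact c.valid ⟨hne, x, hpmem x, y, hpmem y, hadj⟩
    have himg := allcolors hk G hχ v c' hc'
    have hkey : k - 1 ≤ 1 + (G.degree v - s.card) := by
      have hcard : ((G.neighborFinset v).image c').card = k - 1 := by
        rw [himg, Finset.card_univ, Fintype.card_fin]
      have hsplit : G.neighborFinset v = s ∪ (G.neighborFinset v \ s) :=
        (Finset.union_sdiff_of_subset hsub).symm
      have h1 : (s.image c').card ≤ 1 := by
        have hsubim : s.image c' ⊆ {c ⟨v, hvs⟩} := by
          intro β hβ
          obtain ⟨x, hx, rfl⟩ := Finset.mem_image.mp hβ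
          rw [hc'def]
          simp only [hpdef, dif_pos hx, Finset.mem_singleton]
        calc (s.image c').card ≤ ({c ⟨v, hvs⟩} : Finset _).card := Finset.card_le_card hsubim
          _ = 1 := Finset.card_singleton _
      have h2 : ((G.neighborFinset v \ s).image c').card ≤ G.degree v - s.card := by
        calc ((G.neighborFinset v \ s).image c').card ≤ (G.neighborFinset v \ s).card :=
              Finset.card_image_le
          _ = G.degree v - s.card := by
              rw [Finset.card_sdiff_of_subset hsub, G.card_neighborFinset_eq_degree]
      calc k - 1 = ((G.neighborFinset v).image c').card := hcard.symm
        _ = ((s ∪ (G.neighborFinset v \ s)).image c').card := by rw [← hsplit]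
        _ = (s.image c' ∪ (G.neighborFinset v \ s).image c').card := by
            rw [Finset.image_union]
        _ ≤ (s.image c').card + ((G.neighborFinset v \ s).image c').card :=
            Finset.card_union_le _ _
        _ ≤ 1 + (G.degree v - s.card) := Nat.add_le_add h1 h2
    omega
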